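/- Exchangeability-based coverage with finite calibration: if V_1, …, V_{n+1} are exchangeable real-valued random variables with almost surely no ties, then P(V_{n+1} ≤ V_{(⌈(1−α)(n+1)⌉)}) ≥ 1 − α, where V_{(k)} is the k-th order statistic of V_1,…,V_n (interpreted as +∞ if ⌈(1−α)(n+1)⌉ > n). -/

import Mathlib

open MeasureTheory
open scoped ENNReal

/-- The `k`-th order statistic (0-indexed) of a finite real tuple. -/
noncomputable def orderStat {n : ℕ} (v : Fin n → ℝ) (k : Fin n) : ℝ :=
  v (Tuple.sort v k)

lemma aux_card_lt (N c : ℕ) :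
    ((Finset.univ : Finset (Fin N)).filter (fun m => m.val < c)).card = min c N := by
  rw [← Finset.card_image_of_injective _ Fin.val_injective]
  have h : (Finset.image Fin.val ((Finset.univ : Finset (Fin N)).filter (fun m => m.val < c)))
      = Finset.range (min c N) := by
    ext x
    simp only [Finset.mem_image, Finset.mem_filter, Finset.mem_univ, true_and, Finset.mem_range]
    constructor
    · rintro ⟨a, ha, rfl⟩; have := a.isLt; omega
    · intro hx
      exact ⟨⟨x, by omega⟩, by simp only [Fin.val_mk]; omega, rfl⟩
  rw [h, Finset.card_range]

lemma aux_card_perm {ι : Type*} [Fintype ι] (σ : Equiv.Perm ι) (p : ι → Prop)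
    [DecidablePred p] :
    ((Finset.univ : Finset ι).filter (fun i => p (σ i))).card
      = (Finset.univ.filter p).card := by
  rw [← Finset.card_map σ.toEmbedding]
  congr 1
  ext x
  simp only [Finset.mem_map, Finset.mem_filter, Finset.mem_univ, true_and,
    Equiv.coe_toEmbedding]
  constructor
  · rintro ⟨a, ha, rfl⟩; exact ha
  · intro hx; exact ⟨σ.symm x, by simpa using hx, by simp⟩

lemma aux_sorted_count {N : ℕ} {w : Fin N → ℝ} (hw : StrictMono w) (t : ℝ) (a : Fin N) :
    t ≤ w a ↔ ((Finset.univ : Finset (Fin N)).filter (fun m => w m < t)).card ≤ a.val := by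
  constructor
  · intro h
    have hsub : ((Finset.univ : Finset (Fin N)).filter (fun m => w m < t))
        ⊆ (Finset.univ.filter (fun m => m.val < a.val)) := by
      intro m hm
      simp only [Finset.mem_filter, Finset.mem_univ, true_and] at hm ⊢
      have : w m < w a := lt_of_lt_of_le hm h
      exact hw.lt_iff_lt.mp this
    have := Finset.card_le_card hsub
    rw [aux_card_lt] at this
    omega
  · intro h
    by_contra hlt
    push_neg at hlt
    have hsub : (Finset.univ.filter (fun m : Fin N => m.val < a.val + 1))
        ⊆ ((Finset.univ : Finset (Fin N)).filter (fun m => w m < t)) := by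
      intro m hm
      simp only [Finset.mem_filter, Finset.mem_univ, true_and] at hm ⊢
      have hma : m ≤ a := by
        have h1 : m.val ≤ a.val := by omega
        exact Fin.le_def.mpr h1
      exact lt_of_le_of_lt (hw.monotone hma) hlt
    have := Finset.card_le_card hsub
    rw [aux_card_lt] at this
    have := a.isLt
    omega

lemma aux_rank_count {N : ℕ} {v : Fin N → ℝ} (hv : Function.Injective v)
    (k : ℕ) (hk : k ≤ N) :
    ((Finset.univ : Finset (Fin N)).filter
      (fun i => ((Finset.univ : Finset (Fin N)).filter (fun j => v j ≤ v i)).card ≤ k)).card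
      = k := by
  set σ := Tuple.sort v with hσ
  have hw : StrictMono (v ∘ σ) :=
    (Tuple.monotone_sort v).strictMono_of_injective (hv.comp σ.injective)
  have hrank : ∀ m : Fin N,
      ((Finset.univ : Finset (Fin N)).filter (fun j => v j ≤ v (σ m))).card = m.val + 1 := by
    intro m
    rw [← aux_card_perm σ (fun j => v j ≤ v (σ m))]
    have h2 : ∀ j : Fin N, (v (σ j) ≤ v (σ m)) ↔ j.val < m.val + 1 := by
      intro j
      rw [show v (σ j) ≤ v (σ m) ↔ (v ∘ σ) j ≤ (v ∘ σ) m from Iff.rfl, hw.le_iff_le]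
      constructor
      · intro h; have := Fin.le_def.mp h; omega
      · intro h; exact Fin.le_def.mpr (by omega)
    have h3 : (Finset.univ.filter (fun j : Fin N => v (σ j) ≤ v (σ m)))
        = (Finset.univ.filter (fun j : Fin N => j.val < m.val + 1)) := by
      apply Finset.filter_congr; intro j _; simp [h2 j]
    rw [h3, aux_card_lt]
    have := m.isLt; omega
  rw [← aux_card_perm σ (fun i =>
    ((Finset.univ : Finset (Fin N)).filter (fun j => v j ≤ v i)).card ≤ k)]
  have h4 : (Finset.univ.filter (fun m : Fin N =>
      ((Finset.univ : Finset (Fin N)).filter (fun j => v j ≤ v (σ m))).card ≤ k))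
      = (Finset.univ.filter (fun m : Fin N => m.val < k)) := by
    apply Finset.filter_congr; intro m _
    rw [hrank m]; omega
  rw [h4, aux_card_lt]
  omega

lemma aux_event {N : ℕ} (u : Fin (N + 1) → ℝ) (hu : Function.Injective u)
    (k : ℕ) (hk1 : 1 ≤ k) (hk2 : k ≤ N) :
    (((Finset.univ : Finset (Fin (N + 1))).filter (fun j => u j ≤ u (Fin.last N))).card ≤ k)
      ↔ u (Fin.last N) ≤ orderStat (fun i : Fin N => u (Fin.castSucc i)) ⟨k - 1, by omega⟩ := by
  set t := u (Fin.last N) with ht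
  set v : Fin N → ℝ := fun i => u i.castSucc with hv
  have hvinj : Function.Injective v := hu.comp (Fin.castSucc_injective N)
  have hvt : ∀ i : Fin N, v i ≠ t := by
    intro i h
    have h2 := hu h
    exact absurd h2 (Fin.castSucc_lt_last i).ne
  have hsplit : ((Finset.univ : Finset (Fin (N + 1))).filter (fun j => u j ≤ t)).card
      = ((Finset.univ : Finset (Fin N)).filter (fun j => v j < t)).card + 1 := by
    rw [Finset.card_filter, Fin.sum_univ_castSucc, Finset.card_filter]
    have hlast : (if u (Fin.last N) ≤ t then 1 else 0) = 1 := by rw [ht, if_pos le_rfl]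
    rw [hlast]
    congr 1
    apply Finset.sum_congr rfl
    intro j _
    have hiffj : u (Fin.castSucc j) ≤ t ↔ v j < t := by
      constructor
      · intro h; exact lt_of_le_of_ne h (hvt j)
      · intro h; exact le_of_lt h
    rw [if_congr hiffj rfl rfl]
  set σ := Tuple.sort v with hσ
  have hw : StrictMono (v ∘ σ) :=
    (Tuple.monotone_sort v).strictMono_of_injective (hvinj.comp σ.injective)
  have hre : ((Finset.univ : Finset (Fin N)).filter (fun j => v j < t)).card
      = ((Finset.univ : Finset (Fin N)).filter (fun j => (v ∘ σ) j < t)).card :=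
    (aux_card_perm σ (fun j => v j < t)).symm
  have hiff := aux_sorted_count hw t ⟨k - 1, by omega⟩
  have horder : orderStat v ⟨k - 1, by omega⟩ = (v ∘ σ) ⟨k - 1, by omega⟩ := rfl
  simp only [Fin.val_mk] at hiff
  rw [hsplit, hre, horder, hiff]
  omega

theorem stmt_8 {Ω : Type*} [MeasurableSpace Ω]
    (P : Measure Ω) [IsProbabilityMeasure P]
    (n : ℕ) (hn : 0 < n) (α : ℝ) (hα : α ∈ Set.Ioo (0:ℝ) 1)
    (V : Fin (n + 1) → Ω → ℝ) (hmeas : ∀ i, Measurable (V i))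
    (hexch : ∀ σ : Equiv.Perm (Fin (n + 1)),
      Measure.map (fun ω i => V (σ i) ω) P = Measure.map (fun ω i => V i ω) P)
    (hties : ∀ i j, i ≠ j → P {ω | V i ω = V j ω} = 0) :
    1 - α ≤ (P {ω |
      if h : ⌈(1 - α) * (n + 1)⌉₊ ≤ n then
        V (Fin.last n) ω ≤
          orderStat (fun i : Fin n => V (Fin.castSucc i) ω)
            ⟨⌈(1 - α) * (n + 1)⌉₊ - 1, by omega⟩
      else True}).toReal := by
  classical
  obtain ⟨hα0, hα1⟩ := hα
  by_cases h : ⌈(1 - α) * (n + 1)⌉₊ ≤ n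
  swap
  · have hset : {ω : Ω |
        if h : ⌈(1 - α) * (n + 1)⌉₊ ≤ n then
          V (Fin.last n) ω ≤
            orderStat (fun i : Fin n => V (Fin.castSucc i) ω)
              ⟨⌈(1 - α) * (n + 1)⌉₊ - 1, by omega⟩
        else True} = Set.univ := by
      ext ω; simp only [Set.mem_setOf_eq, Set.mem_univ, dif_neg h]
    rw [hset, measure_univ, ENNReal.toReal_one]
    linarith
  · set k := ⌈(1 - α) * (n + 1)⌉₊ with hkdef
    have hk1 : 1 ≤ k := by
      have hpos : (0:ℝ) < (1 - α) * (n + 1) := by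
        apply mul_pos (by linarith)
        positivity
      exact Nat.ceil_pos.mpr hpos
    -- almost sure injectivity
    have hae : ∀ᵐ ω ∂P, Function.Injective (fun i => V i ω) := by
      rw [MeasureTheory.ae_iff]
      have hsub : {ω | ¬ Function.Injective (fun i => V i ω)}
          ⊆ ⋃ (i : Fin (n+1)) (j : Fin (n+1)), {ω | i ≠ j ∧ V i ω = V j ω} := by
        intro ω hω
        obtain ⟨a, b, hab, hne⟩ := Function.not_injective_iff.mp hω
        exact Set.mem_iUnion.mpr ⟨a, Set.mem_iUnion.mpr ⟨b, ⟨hne, hab⟩⟩⟩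
      refine measure_mono_null hsub ?_
      refine measure_iUnion_null fun i => measure_iUnion_null fun j => ?_
      by_cases hij : i = j
      · subst hij; simp
      · exact measure_mono_null (fun ω hω => hω.2) (hties i j hij)
    -- the events A i
    set A : Fin (n+1) → Set Ω := fun i =>
      {ω | ((Finset.univ.filter (fun j => V j ω ≤ V i ω)).card ≤ k)} with hAdef
    have hAmeas : ∀ i, MeasurableSet (A i) := by
      intro i
      have hm : Measurable fun ω =>
          ((Finset.univ.filter (fun j : Fin (n+1) => V j ω ≤ V i ω)).card : ℕ) := by
        simp_rw [Finset.card_filter]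
        apply Finset.measurable_sum
        intro j _
        exact Measurable.ite (measurableSet_le (hmeas j) (hmeas i))
          measurable_const measurable_const
      exact hm (by trivial : MeasurableSet {m : ℕ | m ≤ k})
    -- exchangeability : all A i have the same measure
    set S : Set (Fin (n+1) → ℝ) :=
      {x | ((Finset.univ.filter (fun j => x j ≤ x (Fin.last n))).card ≤ k)} with hSdef
    have hSmeas : MeasurableSet S := by
      have hm : Measurable fun x : Fin (n+1) → ℝ =>
          ((Finset.univ.filter (fun j : Fin (n+1) => x j ≤ x (Fin.last n))).card : ℕ) := by
        simp_rw [Finset.card_filter]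
        apply Finset.measurable_sum
        intro j _
        exact Measurable.ite
          (measurableSet_le (measurable_pi_apply j) (measurable_pi_apply (Fin.last n)))
          measurable_const measurable_const
      exact hm (by trivial : MeasurableSet {m : ℕ | m ≤ k})
    have hVm : Measurable (fun ω => fun i => V i ω) := measurable_pi_lambda _ hmeas
    have hAeq : ∀ i, P (A i) = P (A (Fin.last n)) := by
      intro i
      have h1 := congrArg (fun μ : Measure (Fin (n+1) → ℝ) => μ S)
        (hexch (Equiv.swap i (Fin.last n)))
      rw [Measure.map_apply (measurable_pi_lambda _ (fun j => hmeas _)) hSmeas,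
          Measure.map_apply hVm hSmeas] at h1
      have h2 : (fun ω => fun j => V ((Equiv.swap i (Fin.last n)) j) ω) ⁻¹' S = A i := by
        ext ω
        simp only [Set.mem_preimage, hSdef, hAdef, Set.mem_setOf_eq]
        simp only [Equiv.swap_apply_right]
        rw [aux_card_perm (Equiv.swap i (Fin.last n)) (fun j => V j ω ≤ V i ω)]
      have h3 : (fun ω => fun j => V j ω) ⁻¹' S = A (Fin.last n) := rfl
      rw [h2, h3] at h1
      exact h1
    -- sum of indicators is k a.e.
    have hcard : ∀ᵐ ω ∂P,
        ∑ i : Fin (n+1), (A i).indicator (fun _ => (1:ℝ≥0∞)) ω = (k:ℝ≥0∞) := by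
      filter_upwards [hae] with ω hω
      have hcnt := aux_rank_count (v := fun i => V i ω) hω k (by omega)
      calc ∑ i : Fin (n+1), (A i).indicator (fun _ => (1:ℝ≥0∞)) ω
          = ∑ i : Fin (n+1), (if ((Finset.univ.filter
              (fun j => V j ω ≤ V i ω)).card ≤ k) then (1:ℝ≥0∞) else 0) := by
            apply Finset.sum_congr rfl; intro i _
            simp only [Set.indicator_apply, hAdef, Set.mem_setOf_eq]
        _ = (((Finset.univ : Finset (Fin (n+1))).filter (fun i =>
              ((Finset.univ.filter (fun j => V j ω ≤ V i ω)).card ≤ k))).card : ℝ≥0∞) := by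
            rw [Finset.card_filter, Nat.cast_sum]
            apply Finset.sum_congr rfl; intro i _
            simp only [Nat.cast_ite, Nat.cast_one, Nat.cast_zero]
        _ = (k : ℝ≥0∞) := by rw [hcnt]
    have hsum : ∑ i : Fin (n+1), P (A i) = (k : ℝ≥0∞) := by
      have e1 : ∀ i ∈ (Finset.univ : Finset (Fin (n+1))),
          P (A i) = ∫⁻ ω, (A i).indicator (fun _ => (1:ℝ≥0∞)) ω ∂P := by
        intro i _
        exact (MeasureTheory.lintegral_indicator_one (hAmeas i)).symm
      rw [Finset.sum_congr rfl e1,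
        ← MeasureTheory.lintegral_finset_sum _
          (fun i _ => (measurable_const.indicator (hAmeas i))),
        lintegral_congr_ae hcard, lintegral_const, measure_univ, mul_one]
    have hlastval : P (A (Fin.last n)) = (k : ℝ≥0∞) / ((n+1 : ℕ) : ℝ≥0∞) := by
      have e2 : ∑ i : Fin (n+1), P (A i) = ((n+1 : ℕ) : ℝ≥0∞) * P (A (Fin.last n)) := by
        rw [Finset.sum_congr rfl (fun i _ => hAeq i), Finset.sum_const, Finset.card_univ,
          Fintype.card_fin, nsmul_eq_mul]
      rw [e2] at hsum
      rw [ENNReal.eq_div_iff (by exact_mod_cast Nat.succ_ne_zero n)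
        (ENNReal.natCast_ne_top _)]
      exact hsum
    -- the target event contains A last up to a null set
    have hle : P (A (Fin.last n)) ≤ P {ω : Ω |
        if h : k ≤ n then
          V (Fin.last n) ω ≤
            orderStat (fun i : Fin n => V (Fin.castSucc i) ω)
              ⟨k - 1, by omega⟩
        else True} := by
      apply measure_mono_ae
      filter_upwards [hae] with ω hω hmem
      simp only [Set.mem_setOf_eq, dif_pos h]
      have hmem' : ((Finset.univ.filter
          (fun j => V j ω ≤ V (Fin.last n) ω)).card ≤ k) := hmem
      exact (aux_event (fun i => V i ω) hω k hk1 h).mp hmem'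
    have hfinal : (1:ℝ) - α ≤ (P (A (Fin.last n))).toReal := by
      rw [hlastval, ENNReal.toReal_div, ENNReal.toReal_natCast, ENNReal.toReal_natCast]
      rw [le_div_iff₀ (by positivity)]
      have := Nat.le_ceil ((1 - α) * (n + 1))
      push_cast
      push_cast at this
      linarith
    calc (1:ℝ) - α ≤ (P (A (Fin.last n))).toReal := hfinal
      _ ≤ _ := ENNReal.toReal_mono (measure_ne_top P _) hle
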